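/- Let M ∈ ℝ^{K×K} be symmetric positive definite and let t* = min{αᵀMα : α in the probability simplex}. Then t* > 0, and for the two-stage optimization min_{s≥0} [N₀/(N₀+s)² + (s²/(N₀+s)²)·t*] the optimal value of s is s* = 1/t* and the overall minimum value equals t*/(1 + N₀t*)·(times the factor d/2 in the paper's scaling). -/

import Mathlib

open Finset Matrix

/-- Let `M` be symmetric positive definite and `t*` the minimum of `αᵀMα` over
the probability simplex. Then `t* > 0`, and for the outer optimization
`min_{s≥0} N₀/(N₀+s)² + (s²/(N₀+s)²)·t*` the optimal `s` is `s* = 1/t*`, with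
overall minimum value `t*/(1 + N₀ t*)`. -/
theorem two_stage_optimization
    (K : ℕ) (N₀ : ℝ) (hN₀ : 0 < N₀)
    (M : Matrix (Fin K) (Fin K) ℝ) (hM : M.PosDef)
    (tstar : ℝ)
    (htstar : IsLeast
      {v : ℝ | ∃ α : Fin K → ℝ, (∀ i, 0 ≤ α i) ∧ (∑ i, α i = 1) ∧
        v = α ⬝ᵥ M.mulVec α} tstar)
    (F : ℝ → ℝ)
    (hF : ∀ s, F s = N₀ / (N₀ + s) ^ 2 + s ^ 2 / (N₀ + s) ^ 2 * tstar) :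
    0 < tstar ∧
    (∀ s, 0 ≤ s → F (1 / tstar) ≤ F s) ∧
    F (1 / tstar) = tstar / (1 + N₀ * tstar) := by
  obtain ⟨⟨α, hα0, hα1, hαv⟩, _⟩ := htstar
  have hαne : α ≠ 0 := by
    intro h
    rw [h] at hα1
    simp at hα1
  have ht : 0 < tstar := by
    rw [hαv]
    have := (Matrix.posDef_iff_dotProduct_mulVec.mp hM).2 hαne
    simpa using this
  have hden : (0:ℝ) < N₀ + 1 / tstar := by positivity
  have hval : F (1 / tstar) = tstar / (1 + N₀ * tstar) := by
    rw [hF]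
    field_simp
    ring
  refine ⟨ht, ?_, hval⟩
  intro s hs
  rw [hval, hF]
  have hNs : (0:ℝ) < N₀ + s := by linarith
  have h1 : N₀ / (N₀ + s) ^ 2 + s ^ 2 / (N₀ + s) ^ 2 * tstar
      = (N₀ + s ^ 2 * tstar) / (N₀ + s) ^ 2 := by ring
  rw [h1, div_le_div_iff₀ (by positivity) (by positivity)]
  nlinarith [sq_nonneg (1 - s * tstar), mul_pos hN₀ ht]
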